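/- For real p with 1 < p < n (n > 1 an integer), setting p' = p/(p-1), the three positive numbers μ(p',n), ν(p',n), and π_{p,n}/2 satisfy the law-of-sines relation: ν(p',n)·sin(π/n) = μ(p',n)·sin(π/p'), i.e., they are side lengths of a triangle with opposite angles π/n, π/p', and (1/p - 1/n)π respectively. -/

import Mathlib

open Real MeasureTheory Set


lemma betaR {a b : ℝ} (ha : 0 < a) (hb : 0 < b) :
    ∫ x in Ioo (0:ℝ) 1, x ^ (a-1) * (1-x) ^ (b-1)
      = Real.Gamma a * Real.Gamma b / Real.Gamma (a+b) := by
  have hab : Real.Gamma (a+b) ≠ 0 := (Real.Gamma_pos_of_pos (by linarith)).ne'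
  have h1 : Complex.betaIntegral a b
      = ((Real.Gamma a * Real.Gamma b / Real.Gamma (a+b) : ℝ) : ℂ) := by
    have := Complex.Gamma_mul_Gamma_eq_betaIntegral
      (s := (a:ℂ)) (t := (b:ℂ)) (by simpa using ha) (by simpa using hb)
    rw [← Complex.ofReal_add, Complex.Gamma_ofReal, Complex.Gamma_ofReal,
      Complex.Gamma_ofReal] at this
    push_cast
    rw [eq_div_iff (by exact_mod_cast hab), mul_comm, ← this]
  have h2 : Complex.betaIntegral a b
      = ((∫ x in (0:ℝ)..1, x ^ (a-1) * (1-x) ^ (b-1) : ℝ) : ℂ) := by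
    rw [Complex.betaIntegral, ← intervalIntegral.integral_ofReal]
    apply intervalIntegral.integral_congr
    intro x hx
    rw [uIcc_of_le zero_le_one] at hx
    have hx0 : (0:ℝ) ≤ x := hx.1
    have hx1 : (0:ℝ) ≤ 1 - x := by linarith [hx.2]
    show ((x:ℂ)) ^ ((a:ℂ)-1) * (1 - (x:ℂ)) ^ ((b:ℂ)-1) = ((x ^ (a-1) * (1-x) ^ (b-1) : ℝ) : ℂ)
    have e1 : ((a:ℂ) - 1) = ((a-1 : ℝ) : ℂ) := by push_cast; ring
    have e2 : ((b:ℂ) - 1) = ((b-1 : ℝ) : ℂ) := by push_cast; ring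
    have e3 : (1 - (x:ℂ)) = ((1 - x : ℝ) : ℂ) := by push_cast; ring
    rw [e1, e2, e3, ← Complex.ofReal_cpow hx0, ← Complex.ofReal_cpow hx1]
    push_cast
    ring
  have := h1.symm.trans h2
  have h3 : (∫ x in (0:ℝ)..1, x ^ (a-1) * (1-x) ^ (b-1) : ℝ)
      = Real.Gamma a * Real.Gamma b / Real.Gamma (a+b) := by
    exact_mod_cast this.symm
  rw [← h3, intervalIntegral.integral_of_le zero_le_one,
    MeasureTheory.integral_Ioc_eq_integral_Ioo]


lemma mu_eq (p : ℝ) (n : ℕ) (hn : 1 < n) :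
    ∫ v in Ioo (0:ℝ) 1, v ^ (-(1/p)) * (1-v) ^ (1/p - (n:ℝ)⁻¹ - 1)
      = (n:ℝ) * ∫ t in Ioi (1:ℝ), ((t:ℝ) ^ n - 1) ^ (-(1/p)) := by
  have hn0 : (0:ℝ) < n := by positivity
  have hnR : (n:ℝ) ≠ 0 := hn0.ne'
  set f : ℝ → ℝ := fun t => 1 - t ^ (-(n:ℝ)) with hf
  set F' : ℝ → ℝ := fun t => (n:ℝ) * t ^ (-(n:ℝ)-1) with hF'
  have hderiv : ∀ t ∈ Ioi (1:ℝ), HasDerivWithinAt f (F' t) (Ioi 1) t := by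
    intro t ht
    have ht0 : (0:ℝ) < t := lt_trans one_pos ht
    have h := (Real.hasDerivAt_rpow_const (x := t) (p := -(n:ℝ))
      (Or.inl ht0.ne')).const_sub 1
    have : F' t = -(-(n:ℝ) * t ^ (-(n:ℝ) - 1)) := by rw [hF']; ring_nf
    rw [this]
    exact h.hasDerivWithinAt
  have hinj : InjOn f (Ioi 1) := by
    intro s hs t ht h
    have hs0 : (0:ℝ) ≤ s := le_of_lt (lt_trans one_pos hs)
    have ht0 : (0:ℝ) ≤ t := le_of_lt (lt_trans one_pos ht)
    have : s ^ (-(n:ℝ)) = t ^ (-(n:ℝ)) := by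
      have h2 : 1 - s ^ (-(n:ℝ)) = 1 - t ^ (-(n:ℝ)) := h
      linarith
    exact Real.rpow_left_injOn (x := -(n:ℝ)) (by simpa using hnR) hs0 ht0 this
  have himg : f '' Ioi 1 = Ioo 0 1 := by
    ext v
    constructor
    · rintro ⟨t, ht, rfl⟩
      have ht1 : (1:ℝ) < t := ht
      have h1 : t ^ (-(n:ℝ)) < 1 :=
        Real.rpow_lt_one_of_one_lt_of_neg ht1 (by simpa using hn0)
      have h2 : 0 < t ^ (-(n:ℝ)) := Real.rpow_pos_of_pos (lt_trans one_pos ht1) _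
      exact ⟨by show (0:ℝ) < 1 - t ^ (-(n:ℝ)); linarith, by show 1 - t ^ (-(n:ℝ)) < (1:ℝ); linarith⟩
    · intro hv
      refine ⟨(1-v) ^ (-(n:ℝ)⁻¹), ?_, ?_⟩
      · have h1v : 0 < 1 - v := by linarith [hv.2]
        rw [mem_Ioi, Real.one_lt_rpow_iff_of_pos h1v]
        right
        constructor
        · linarith [hv.1]
        · simp [hn0]
      · have h1v : (0:ℝ) ≤ 1 - v := by linarith [hv.2]
        rw [hf]
        simp only
        rw [← Real.rpow_mul h1v, neg_mul_neg, inv_mul_cancel₀ hnR, Real.rpow_one]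
        ring
  rw [← himg, integral_image_eq_integral_abs_deriv_smul measurableSet_Ioi hderiv hinj]
  rw [← MeasureTheory.integral_const_mul]
  apply MeasureTheory.setIntegral_congr_fun measurableSet_Ioi
  intro t ht
  have ht1 : (1:ℝ) < t := ht
  have ht0 : (0:ℝ) < t := lt_trans one_pos ht1
  have hA1 : (1:ℝ) < t ^ n := one_lt_pow₀ ht1 (by omega)
  have hAm : (0:ℝ) < t ^ n - 1 := by linarith
  have hrp : t ^ (-(n:ℝ)) = ((t:ℝ) ^ n)⁻¹ := by
    rw [Real.rpow_neg ht0.le, Real.rpow_natCast]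
  have hft : f t = (t ^ n - 1) * t ^ (-(n:ℝ)) := by
    rw [hf]; simp only [hrp]; field_simp
  have h1ft : 1 - f t = t ^ (-(n:ℝ)) := by rw [hf]; ring
  have habs : |F' t| = (n:ℝ) * t ^ (-(n:ℝ)-1) := by
    rw [hF']
    exact abs_of_pos (by positivity)
  simp only [smul_eq_mul]
  rw [habs, h1ft, hft,
    Real.mul_rpow hAm.le (Real.rpow_nonneg ht0.le _),
    ← Real.rpow_natCast t n]
  rw [← Real.rpow_mul ht0.le, ← Real.rpow_mul ht0.le]
  have key : t ^ (-(n:ℝ)-1) * (t ^ (-(n:ℝ) * -(1/p)) * t ^ (-(n:ℝ) * (1/p - (n:ℝ)⁻¹ - 1))) = 1 := by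
    rw [← Real.rpow_add ht0, ← Real.rpow_add ht0,
      show (-(n:ℝ)-1) + ((-(n:ℝ) * -(1/p)) + (-(n:ℝ) * (1/p - (n:ℝ)⁻¹ - 1))) = 0 by
        field_simp; ring]
    exact Real.rpow_zero t
  calc (n:ℝ) * t ^ (-(n:ℝ)-1) * ((t ^ ((n:ℝ)) - 1) ^ (-(1/p)) * t ^ (-(n:ℝ) * -(1/p))
      * t ^ (-(n:ℝ) * (1/p - (n:ℝ)⁻¹ - 1)))
      = (n:ℝ) * (t ^ ((n:ℝ)) - 1) ^ (-(1/p))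
        * (t ^ (-(n:ℝ)-1) * (t ^ (-(n:ℝ) * -(1/p)) * t ^ (-(n:ℝ) * (1/p - (n:ℝ)⁻¹ - 1)))) := by
        ring
    _ = (n:ℝ) * (t ^ ((n:ℝ)) - 1) ^ (-(1/p)) := by rw [key]; ring


lemma nu_eq (p : ℝ) (n : ℕ) (hn : 1 < n) :
    ∫ v in Ioo (0:ℝ) 1, v ^ ((n:ℝ)⁻¹ - 1) * (1-v) ^ (1/p - (n:ℝ)⁻¹ - 1)
      = (n:ℝ) * ∫ t in Ioi (0:ℝ), (1 + t ^ n) ^ (-(1/p)) := by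
  have hn0 : (0:ℝ) < n := by positivity
  have hnR : (n:ℝ) ≠ 0 := hn0.ne'
  set f : ℝ → ℝ := fun t => 1 - (1 + t ^ n)⁻¹ with hf
  set F' : ℝ → ℝ := fun t => (n:ℝ) * t ^ (n-1) * ((1 + t ^ n) ^ 2)⁻¹ with hF'
  have hB0 : ∀ t : ℝ, 0 < t → 0 < 1 + t ^ n := fun t ht => by positivity
  have hderiv : ∀ t ∈ Ioi (0:ℝ), HasDerivWithinAt f (F' t) (Ioi 0) t := by
    intro t ht
    have ht0 : (0:ℝ) < t := ht
    have h1 : HasDerivAt (fun t : ℝ => 1 + t ^ n) ((n:ℝ) * t ^ (n-1)) t := by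
      simpa using (hasDerivAt_pow n t).const_add 1
    have h2 := (h1.inv (hB0 t ht0).ne').const_sub 1
    have : F' t = -(-((n:ℝ) * t ^ (n-1)) / (1 + t ^ n) ^ 2) := by
      rw [hF']; field_simp
    rw [this]
    exact h2.hasDerivWithinAt
  have hinj : InjOn f (Ioi 0) := by
    intro s hs t ht h
    have h2 : (1 + s ^ n)⁻¹ = (1 + t ^ n)⁻¹ := by
      have : 1 - (1 + s ^ n)⁻¹ = 1 - (1 + t ^ n)⁻¹ := h
      linarith
    have h3 : s ^ n = t ^ n := by
      have := inv_injective h2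
      linarith
    exact (pow_left_strictMonoOn₀ (by omega : n ≠ 0)).injOn
      (le_of_lt hs) (le_of_lt ht) h3
  have himg : f '' Ioi 0 = Ioo 0 1 := by
    ext v
    constructor
    · rintro ⟨t, ht, rfl⟩
      have ht0 : (0:ℝ) < t := ht
      have h1 : 1 < 1 + t ^ n := by
        have : 0 < t ^ n := by positivity
        linarith
      have h2 : (1 + t ^ n)⁻¹ < 1 := by
        rw [inv_lt_one_iff₀]; right; exact h1
      have h3 : 0 < (1 + t ^ n)⁻¹ := by positivity
      exact ⟨by simp [hf]; linarith, by simp [hf]; linarith⟩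
    · intro hv
      have hv0 := hv.1
      have hv1 : 0 < 1 - v := by linarith [hv.2]
      refine ⟨(v / (1-v)) ^ ((n:ℝ)⁻¹), ?_, ?_⟩
      · exact Real.rpow_pos_of_pos (by positivity) _
      · have hx0 : (0:ℝ) ≤ v / (1-v) := by positivity
        have hpow : ((v / (1-v)) ^ ((n:ℝ)⁻¹)) ^ n = v / (1-v) := by
          rw [← Real.rpow_natCast ((v / (1-v)) ^ ((n:ℝ)⁻¹)) n,
            ← Real.rpow_mul hx0, inv_mul_cancel₀ hnR, Real.rpow_one]
        rw [hf]
        simp only [hpow]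
        rw [show 1 + v / (1-v) = (1-v)⁻¹ by field_simp; ring]
        field_simp
        ring
  rw [← himg, integral_image_eq_integral_abs_deriv_smul measurableSet_Ioi hderiv hinj]
  rw [← MeasureTheory.integral_const_mul]
  apply MeasureTheory.setIntegral_congr_fun measurableSet_Ioi
  intro t ht
  have ht0 : (0:ℝ) < t := ht
  have htn : (0:ℝ) < t ^ n := by positivity
  have hB : (0:ℝ) < 1 + t ^ n := by linarith
  have hft : f t = t ^ n * (1 + t ^ n)⁻¹ := by
    rw [hf]; field_simp; ring
  have h1ft : 1 - f t = (1 + t ^ n)⁻¹ := by rw [hf]; ring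
  have habs : |F' t| = (n:ℝ) * t ^ (n-1) * ((1 + t ^ n) ^ 2)⁻¹ := by
    rw [hF']
    exact abs_of_pos (by positivity)
  simp only [smul_eq_mul]
  have e1 : (t ^ n : ℝ) ^ ((n:ℝ)⁻¹ - 1) = t ^ ((n:ℝ) * ((n:ℝ)⁻¹ - 1)) := by
    rw [← Real.rpow_natCast t n, ← Real.rpow_mul ht0.le]
  have e2 : (t:ℝ) ^ (n-1) = t ^ ((n:ℝ) - 1) := by
    rw [← Real.rpow_natCast t (n-1), Nat.cast_sub (by omega : 1 ≤ n), Nat.cast_one]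
  have e3 : ∀ y : ℝ, ((1 + t ^ n : ℝ)⁻¹) ^ y = (1 + t ^ n : ℝ) ^ (-y) := by
    intro y
    rw [Real.inv_rpow hB.le, ← Real.rpow_neg hB.le]
  have e4 : (((1 + t ^ n : ℝ)) ^ (2:ℕ))⁻¹ = (1 + t ^ n : ℝ) ^ (-2:ℝ) := by
    rw [← Real.rpow_natCast (1 + t ^ n : ℝ) 2, ← Real.rpow_neg hB.le]
    norm_num
  rw [habs, h1ft, hft, Real.mul_rpow htn.le (by positivity), e1, e2, e3, e3, e4]
  have keyt : t ^ ((n:ℝ) - 1) * t ^ ((n:ℝ) * ((n:ℝ)⁻¹ - 1)) = 1 := by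
    rw [← Real.rpow_add ht0,
      show ((n:ℝ) - 1) + (n:ℝ) * ((n:ℝ)⁻¹ - 1) = 0 by field_simp; ring]
    exact Real.rpow_zero t
  have keyB : (1 + t ^ n : ℝ) ^ (-2:ℝ) * ((1 + t ^ n : ℝ) ^ (-((n:ℝ)⁻¹ - 1))
      * (1 + t ^ n : ℝ) ^ (-(1/p - (n:ℝ)⁻¹ - 1))) = (1 + t ^ n : ℝ) ^ (-(1/p)) := by
    rw [← Real.rpow_add hB, ← Real.rpow_add hB]
    ring_nf
  calc (n:ℝ) * t ^ ((n:ℝ) - 1) * ((1 + t ^ n : ℝ) ^ (-2:ℝ))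
      * (t ^ ((n:ℝ) * ((n:ℝ)⁻¹ - 1)) * (1 + t ^ n : ℝ) ^ (-((n:ℝ)⁻¹ - 1))
        * (1 + t ^ n : ℝ) ^ (-(1/p - (n:ℝ)⁻¹ - 1)))
      = (n:ℝ) * (t ^ ((n:ℝ) - 1) * t ^ ((n:ℝ) * ((n:ℝ)⁻¹ - 1)))
        * ((1 + t ^ n : ℝ) ^ (-2:ℝ) * ((1 + t ^ n : ℝ) ^ (-((n:ℝ)⁻¹ - 1))
          * (1 + t ^ n : ℝ) ^ (-(1/p - (n:ℝ)⁻¹ - 1)))) := by ring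
    _ = (n:ℝ) * (1 + t ^ n : ℝ) ^ (-(1/p)) := by rw [keyt, keyB]; ring


theorem stmt_6 (p : ℝ) (n : ℕ) (hp : 1 < p) (hn : 1 < n) (hpn : p < n) :
    (∫ t in Ioi (0:ℝ), (1 + t ^ n) ^ (-(1/p))) * Real.sin (π / n)
      = (∫ t in Ioi (1:ℝ), (t ^ n - 1) ^ (-(1/p))) * Real.sin (π / (p / (p - 1))) := by
  have hp0 : (0:ℝ) < p := by linarith
  have hn0 : (0:ℝ) < n := by positivity
  have hnR : (n:ℝ) ≠ 0 := hn0.ne'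
  have hc0 : (0:ℝ) < (n:ℝ)⁻¹ := by positivity
  have hc1 : (n:ℝ)⁻¹ < 1 := by
    rw [inv_lt_one_iff₀]; right; exact_mod_cast hn
  have hq0 : (0:ℝ) < 1/p := by positivity
  have hq1 : 1/p < 1 := by rw [div_lt_one hp0]; exact hp
  have hcq : (n:ℝ)⁻¹ < 1/p := by
    rw [one_div]
    exact inv_strictAnti₀ hp0 hpn
  have hb : (0:ℝ) < 1/p - (n:ℝ)⁻¹ := by linarith
  have hnu := nu_eq p n hn
  have hmu := mu_eq p n hn
  have hbeta1 := betaR hc0 hb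
  have hbeta2 := betaR (a := 1 - 1/p) (by linarith) hb
  rw [show (1:ℝ) - 1/p - 1 = -(1/p) by ring,
    show (1:ℝ) - 1/p + (1/p - (n:ℝ)⁻¹) = 1 - (n:ℝ)⁻¹ by ring] at hbeta2
  rw [show (n:ℝ)⁻¹ + (1/p - (n:ℝ)⁻¹) = 1/p by ring] at hbeta1
  rw [hbeta1] at hnu
  rw [hbeta2] at hmu
  have hG3 : 0 < Real.Gamma (1/p) := Real.Gamma_pos_of_pos hq0
  have hG2 : 0 < Real.Gamma (1 - (n:ℝ)⁻¹) := Real.Gamma_pos_of_pos (by linarith)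
  have hs1 : 0 < Real.sin (π * (n:ℝ)⁻¹) :=
    Real.sin_pos_of_pos_of_lt_pi (by positivity) (mul_lt_of_lt_one_right pi_pos hc1)
  have hs2 : 0 < Real.sin (π * (1/p)) :=
    Real.sin_pos_of_pos_of_lt_pi (by positivity) (mul_lt_of_lt_one_right pi_pos hq1)
  have e1 : Real.Gamma ((n:ℝ)⁻¹) * Real.Gamma (1 - (n:ℝ)⁻¹) * Real.sin (π * (n:ℝ)⁻¹) = π := by
    rw [Real.Gamma_mul_Gamma_one_sub]
    exact div_mul_cancel₀ _ hs1.ne'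
  have e2 : Real.Gamma (1/p) * Real.Gamma (1 - 1/p) * Real.sin (π * (1/p)) = π := by
    rw [Real.Gamma_mul_Gamma_one_sub]
    exact div_mul_cancel₀ _ hs2.ne'
  have hsin2 : Real.sin (π / (p / (p-1))) = Real.sin (π * (1/p)) := by
    rw [show π / (p / (p-1)) = π - π * (1/p) by
      field_simp, Real.sin_pi_sub]
  have hsin1 : (π / (n:ℝ)) = π * (n:ℝ)⁻¹ := div_eq_mul_inv _ _
  rw [hsin1, hsin2]
  have hν : ∫ t in Ioi (0:ℝ), (1 + t ^ n) ^ (-(1/p))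
      = Real.Gamma ((n:ℝ)⁻¹) * Real.Gamma (1/p - (n:ℝ)⁻¹) / Real.Gamma (1/p) / n := by
    rw [eq_div_iff hnR]
    linear_combination -hnu
  have hμ : ∫ t in Ioi (1:ℝ), (t ^ n - 1) ^ (-(1/p))
      = Real.Gamma (1 - 1/p) * Real.Gamma (1/p - (n:ℝ)⁻¹) / Real.Gamma (1 - (n:ℝ)⁻¹) / n := by
    rw [eq_div_iff hnR]
    linear_combination -hmu
  rw [hν, hμ]
  have key : ∀ g1 g2 g3 g4 g5 s1 s2 m : ℝ, g2 ≠ 0 → g3 ≠ 0 → m ≠ 0 →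
      g1 * g2 * s1 = π → g3 * g4 * s2 = π →
      g1 * g5 / g3 / m * s1 = g4 * g5 / g2 / m * s2 := by
    intro g1 g2 g3 g4 g5 s1 s2 m h2 h3 hm h1' h2'
    field_simp
    linear_combination g5 * h1' - g5 * h2'
  exact key _ _ _ _ _ _ _ _ hG2.ne' hG3.ne' hnR e1 e2
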